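/- Let n ≥ 1, let f_1, ..., f_n : ℝ^d → ℝ each be differentiable with L-Lipschitz gradient (L ≥ 0), and let f = (1/n)∑_{i=1}^n f_i. Fix x, x̃ ∈ ℝ^d, step size η > 0, parameter β > 0, and constant c ≥ 0, and let v_i = ∇f_i(x) − ∇f_i(x̃) + ∇f(x̃) for i = 1,...,n. Set c' = c(1 + ηβ + 2η²L²) + η²L³. Then (1/n) ∑_{i=1}^n [ f(x − η v_i) + c‖(x − η v_i) − x̃‖² ] ≤ f(x) + c'‖x − x̃‖² − (η − cη/β − η²L − 2cη²)·‖∇f(x)‖². -/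

import Mathlib

open scoped RealInnerProductSpace InnerProductSpace

section Helpers


variable {E : Type*} [NormedAddCommGroup E] [InnerProductSpace ℝ E] [CompleteSpace E]

lemma descent_lemma {φ : E → ℝ} {L : ℝ} (hL : 0 ≤ L) (hφ : Differentiable ℝ φ)
    (hlip : ∀ a b, ‖gradient φ a - gradient φ b‖ ≤ L * ‖a - b‖) (x y : E) :
    φ y ≤ φ x + ⟪gradient φ x, y - x⟫ + L / 2 * ‖y - x‖ ^ 2 := by
  set p : ℝ → E := fun t => x + t • (y - x) with hp
  have hcont : Continuous (gradient φ) := by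
    have : LipschitzWith ⟨L, hL⟩ (gradient φ) := by
      apply LipschitzWith.of_dist_le_mul
      intro a b
      show dist _ _ ≤ L * dist a b
      simpa [dist_eq_norm] using hlip a b
    exact this.continuous
  have hpc : Continuous p := by fun_prop
  have hpD : ∀ t : ℝ, HasDerivAt p (y - x) t := by
    intro t
    simpa [hp] using ((hasDerivAt_id t).smul_const (y - x)).const_add x
  have hD : ∀ t : ℝ, HasDerivAt (fun t => φ (p t)) ⟪gradient φ (p t), y - x⟫ t := by
    intro t
    have h1 := ((hφ (p t)).hasGradientAt.hasFDerivAt).comp_hasDerivAt t (hpD t)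
    simpa [InnerProductSpace.toDual_apply_apply, Function.comp_def] using h1
  have hDc : Continuous fun t : ℝ => ⟪gradient φ (p t), y - x⟫ :=
    (hcont.comp hpc).inner continuous_const
  have hFTC : φ y - φ x = ∫ t in (0:ℝ)..1, ⟪gradient φ (p t), y - x⟫ := by
    have h2 := intervalIntegral.integral_eq_sub_of_hasDerivAt
      (f := fun t => φ (p t)) (fun t _ => hD t) (hDc.intervalIntegrable 0 1)
    rw [h2]
    simp [hp]
  have hbound : ∀ t ∈ Set.Icc (0:ℝ) 1,
      ⟪gradient φ (p t), y - x⟫ ≤ ⟪gradient φ x, y - x⟫ + t * (L * ‖y - x‖ ^ 2) := by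
    intro t ht
    have h1 : ⟪gradient φ (p t) - gradient φ x, y - x⟫
        ≤ ‖gradient φ (p t) - gradient φ x‖ * ‖y - x‖ := real_inner_le_norm _ _
    have h2 : ‖gradient φ (p t) - gradient φ x‖ ≤ L * (t * ‖y - x‖) := by
      have h3 := hlip (p t) x
      simpa [hp, norm_smul, abs_of_nonneg ht.1, mul_assoc] using h3
    rw [inner_sub_left] at h1
    have h4 : ‖gradient φ (p t) - gradient φ x‖ * ‖y - x‖ ≤ L * (t * ‖y - x‖) * ‖y - x‖ :=
      mul_le_mul_of_nonneg_right h2 (norm_nonneg _)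
    nlinarith [norm_nonneg (y - x)]
  have hmono : ∫ t in (0:ℝ)..1, ⟪gradient φ (p t), y - x⟫
      ≤ ∫ t in (0:ℝ)..1, (⟪gradient φ x, y - x⟫ + t * (L * ‖y - x‖ ^ 2)) := by
    apply intervalIntegral.integral_mono_on (by norm_num) (hDc.intervalIntegrable 0 1)
      ((continuous_const.add (continuous_id.mul continuous_const)).intervalIntegrable 0 1) hbound
  have hInt : ∫ t in (0:ℝ)..1, (⟪gradient φ x, y - x⟫ + t * (L * ‖y - x‖ ^ 2))
      = ⟪gradient φ x, y - x⟫ + L / 2 * ‖y - x‖ ^ 2 := by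
    rw [intervalIntegral.integral_add intervalIntegrable_const
      (Continuous.intervalIntegrable (by continuity) 0 1)]
    simp
    ring
  linarith [hFTC ▸ hmono.trans_eq hInt]


variable {E : Type*} [NormedAddCommGroup E] [InnerProductSpace ℝ E] [CompleteSpace E]

lemma norm_add_sq_le' (a b : E) : ‖a + b‖ ^ 2 ≤ 2 * ‖a‖ ^ 2 + 2 * ‖b‖ ^ 2 := by
  have h := norm_add_le a b
  nlinarith [norm_nonneg a, norm_nonneg b, norm_nonneg (a + b), sq_nonneg (‖a‖ - ‖b‖)]


end Helpers

set_option maxHeartbeats 1000000 in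


/-- One-step Lyapunov inequality (Eq. (12) combined with Lemma 3) in the proof of
Lemma 1: for the Lyapunov function `A(z) = f(z) + c‖z − x̃‖²`, one SVRG inner step
decreases `A` in expectation by at least `(η − cη/β − η²L − 2cη²)‖∇f(x)‖²`. -/
theorem stmt11 {d n : ℕ} (hn : 1 ≤ n) (L : ℝ) (hL : 0 ≤ L)
    (f : Fin n → EuclideanSpace ℝ (Fin d) → ℝ)
    (hdiff : ∀ i, Differentiable ℝ (f i))
    (hlip : ∀ i, ∀ a b, ‖gradient (f i) a - gradient (f i) b‖ ≤ L * ‖a - b‖)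
    (F : EuclideanSpace ℝ (Fin d) → ℝ)
    (hF : F = fun y => (1 / (n : ℝ)) * ∑ i, f i y)
    (x xtilde : EuclideanSpace ℝ (Fin d)) (η β c : ℝ)
    (hη : 0 < η) (hβ : 0 < β) (hc : 0 ≤ c)
    (v : Fin n → EuclideanSpace ℝ (Fin d))
    (hv : ∀ i, v i = gradient (f i) x - gradient (f i) xtilde + gradient F xtilde)
    (c' : ℝ) (hc' : c' = c * (1 + η * β + 2 * η ^ 2 * L ^ 2) + η ^ 2 * L ^ 3) :
    (1 / (n : ℝ)) * ∑ i, (F (x - η • v i) + c * ‖(x - η • v i) - xtilde‖ ^ 2)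
      ≤ F x + c' * ‖x - xtilde‖ ^ 2
        - (η - c * η / β - η ^ 2 * L - 2 * c * η ^ 2) * ‖gradient F x‖ ^ 2 := by
  have hn0 : (n : ℝ) ≠ 0 := Nat.cast_ne_zero.mpr (by omega)
  have hnpos : (0 : ℝ) < n := by positivity
  have hβ0 : β ≠ 0 := hβ.ne'
  -- gradient of F
  have hgF : ∀ y, HasGradientAt F ((n : ℝ)⁻¹ • ∑ i, gradient (f i) y) y := by
    intro y
    rw [hasGradientAt_iff_hasFDerivAt]
    have h1 : HasFDerivAt (fun z => ∑ i, f i z)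
        (∑ i, (InnerProductSpace.toDual ℝ _) (gradient (f i) y)) y :=
      HasFDerivAt.fun_sum fun i _ => (hdiff i y).hasGradientAt.hasFDerivAt
    have h2 := h1.const_mul ((n : ℝ)⁻¹)
    rw [hF]
    simp only [map_smulₛₗ, map_sum, starRingEnd_apply, star_trivial, one_div]
    convert h2 using 2
  have hGF : ∀ y, gradient F y = (n : ℝ)⁻¹ • ∑ i, gradient (f i) y :=
    fun y => (hgF y).gradient
  have hFdiff : Differentiable ℝ F := fun y => (hgF y).differentiableAt
  have hFlip : ∀ a b, ‖gradient F a - gradient F b‖ ≤ L * ‖a - b‖ := by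
    intro a b
    rw [hGF a, hGF b, ← smul_sub, ← Finset.sum_sub_distrib, norm_smul]
    have h1 : ‖∑ i, (gradient (f i) a - gradient (f i) b)‖ ≤ (n : ℝ) * (L * ‖a - b‖) := by
      refine (norm_sum_le _ _).trans ?_
      calc ∑ i, ‖gradient (f i) a - gradient (f i) b‖ ≤ ∑ _i : Fin n, L * ‖a - b‖ :=
            Finset.sum_le_sum fun i _ => hlip i a b
        _ = (n : ℝ) * (L * ‖a - b‖) := by
            rw [Finset.sum_const, Finset.card_univ, Fintype.card_fin, nsmul_eq_mul]
    have h2 : ‖(n : ℝ)⁻¹‖ = (n : ℝ)⁻¹ := by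
      rw [Real.norm_eq_abs, abs_of_nonneg (by positivity)]
    rw [h2]
    calc (n : ℝ)⁻¹ * ‖∑ i, (gradient (f i) a - gradient (f i) b)‖
        ≤ (n : ℝ)⁻¹ * ((n : ℝ) * (L * ‖a - b‖)) := by
          exact mul_le_mul_of_nonneg_left h1 (by positivity)
      _ = L * ‖a - b‖ := by field_simp
  set G := gradient F x with hG
  set Gt := gradient F xtilde with hGt
  set w := x - xtilde with hw
  set K := L / 2 * η ^ 2 + c * η ^ 2 with hK
  have hK0 : 0 ≤ K := by rw [hK]; positivity
  have hsx : ∑ i, gradient (f i) x = (n : ℝ) • G := by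
    rw [hG, hGF, smul_smul, mul_inv_cancel₀ hn0, one_smul]
  have hsxt : ∑ i, gradient (f i) xtilde = (n : ℝ) • Gt := by
    rw [hGt, hGF, smul_smul, mul_inv_cancel₀ hn0, one_smul]
  have hsv : ∑ i, v i = (n : ℝ) • G := by
    have h1 : ∑ i, v i = (∑ i, gradient (f i) x) - (∑ i, gradient (f i) xtilde)
        + (n : ℝ) • Gt := by
      simp only [hv]
      rw [Finset.sum_add_distrib, Finset.sum_sub_distrib, Finset.sum_const, Finset.card_univ,
        Fintype.card_fin, ← Nat.cast_smul_eq_nsmul ℝ]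
    rw [h1, hsx, hsxt]
    abel
  have hsvG : ⟪G, ∑ i, v i⟫ = (n : ℝ) * ‖G‖ ^ 2 := by
    rw [hsv, real_inner_smul_right, real_inner_self_eq_norm_sq]
  have hsvw : ⟪w, ∑ i, v i⟫ = (n : ℝ) * ⟪w, G⟫ := by
    rw [hsv, real_inner_smul_right]
  -- variance bound
  have hhbar : ∑ i, (gradient (f i) x - gradient (f i) xtilde) = (n : ℝ) • (G - Gt) := by
    rw [Finset.sum_sub_distrib, hsx, hsxt, smul_sub]
  have hvar : ∑ i, ‖(gradient (f i) x - gradient (f i) xtilde) - (G - Gt)‖ ^ 2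
      ≤ ∑ i, ‖gradient (f i) x - gradient (f i) xtilde‖ ^ 2 := by
    have hs : ∑ i, ⟪gradient (f i) x - gradient (f i) xtilde, G - Gt⟫
        = (n : ℝ) * ‖G - Gt‖ ^ 2 := by
      rw [← sum_inner, hhbar, real_inner_smul_left, real_inner_self_eq_norm_sq]
    calc ∑ i, ‖(gradient (f i) x - gradient (f i) xtilde) - (G - Gt)‖ ^ 2
        = ∑ i, (‖gradient (f i) x - gradient (f i) xtilde‖ ^ 2
            - 2 * ⟪gradient (f i) x - gradient (f i) xtilde, G - Gt⟫ + ‖G - Gt‖ ^ 2) :=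
          Finset.sum_congr rfl fun i _ => norm_sub_sq_real _ _
      _ = (∑ i, ‖gradient (f i) x - gradient (f i) xtilde‖ ^ 2)
            - 2 * ((n : ℝ) * ‖G - Gt‖ ^ 2) + (n : ℝ) * ‖G - Gt‖ ^ 2 := by
          rw [Finset.sum_add_distrib, Finset.sum_sub_distrib, ← Finset.mul_sum, hs,
            Finset.sum_const, Finset.card_univ, Fintype.card_fin, nsmul_eq_mul]
      _ ≤ ∑ i, ‖gradient (f i) x - gradient (f i) xtilde‖ ^ 2 := by
          nlinarith [sq_nonneg ‖G - Gt‖, hnpos]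
  have hMn : ∑ i, ‖v i‖ ^ 2 ≤ (n : ℝ) * (2 * ‖G‖ ^ 2 + 2 * L ^ 2 * ‖w‖ ^ 2) := by
    have hvi : ∀ i, v i = ((gradient (f i) x - gradient (f i) xtilde) - (G - Gt)) + G := by
      intro i; rw [hv]; abel
    have h5 : ∀ i, ‖v i‖ ^ 2
        ≤ 2 * ‖(gradient (f i) x - gradient (f i) xtilde) - (G - Gt)‖ ^ 2 + 2 * ‖G‖ ^ 2 := by
      intro i
      rw [hvi i]
      exact norm_add_sq_le' _ _
    have h6 : ∀ i : Fin n, ‖gradient (f i) x - gradient (f i) xtilde‖ ^ 2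
        ≤ L ^ 2 * ‖w‖ ^ 2 := by
      intro i
      have h7 := hlip i x xtilde
      rw [← hw] at h7
      calc ‖gradient (f i) x - gradient (f i) xtilde‖ ^ 2 ≤ (L * ‖w‖) ^ 2 :=
            pow_le_pow_left₀ (norm_nonneg _) h7 2
        _ = L ^ 2 * ‖w‖ ^ 2 := by ring
    calc ∑ i, ‖v i‖ ^ 2
        ≤ ∑ i, (2 * ‖(gradient (f i) x - gradient (f i) xtilde) - (G - Gt)‖ ^ 2
            + 2 * ‖G‖ ^ 2) := Finset.sum_le_sum fun i _ => h5 i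
      _ = 2 * (∑ i, ‖(gradient (f i) x - gradient (f i) xtilde) - (G - Gt)‖ ^ 2)
            + (n : ℝ) * (2 * ‖G‖ ^ 2) := by
          rw [Finset.sum_add_distrib, ← Finset.mul_sum, Finset.sum_const, Finset.card_univ,
            Fintype.card_fin, nsmul_eq_mul]
      _ ≤ 2 * (∑ i, ‖gradient (f i) x - gradient (f i) xtilde‖ ^ 2)
            + (n : ℝ) * (2 * ‖G‖ ^ 2) := by linarith [hvar]
      _ ≤ 2 * ((n : ℝ) * (L ^ 2 * ‖w‖ ^ 2)) + (n : ℝ) * (2 * ‖G‖ ^ 2) := by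
          have h8 : ∑ i, ‖gradient (f i) x - gradient (f i) xtilde‖ ^ 2
              ≤ (n : ℝ) * (L ^ 2 * ‖w‖ ^ 2) := by
            calc ∑ i, ‖gradient (f i) x - gradient (f i) xtilde‖ ^ 2
                ≤ ∑ _i : Fin n, L ^ 2 * ‖w‖ ^ 2 := Finset.sum_le_sum fun i _ => h6 i
              _ = (n : ℝ) * (L ^ 2 * ‖w‖ ^ 2) := by
                  rw [Finset.sum_const, Finset.card_univ, Fintype.card_fin, nsmul_eq_mul]
          linarith
      _ = (n : ℝ) * (2 * ‖G‖ ^ 2 + 2 * L ^ 2 * ‖w‖ ^ 2) := by ring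
  -- per-index inequality
  have key : ∀ i : Fin n, F (x - η • v i) + c * ‖(x - η • v i) - xtilde‖ ^ 2
      ≤ (F x + c * ‖w‖ ^ 2) - η * ⟪G, v i⟫ - 2 * c * η * ⟪w, v i⟫ + K * ‖v i‖ ^ 2 := by
    intro i
    have h1 := descent_lemma hL hFdiff hFlip x (x - η • v i)
    rw [← hG] at h1
    have e1 : (x - η • v i) - x = -(η • v i) := by abel
    rw [e1, inner_neg_right, real_inner_smul_right, norm_neg, norm_smul] at h1
    simp only [Real.norm_eq_abs, mul_pow, sq_abs] at h1
    have e2 : ‖(x - η • v i) - xtilde‖ ^ 2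
        = ‖w‖ ^ 2 - 2 * (η * ⟪w, v i⟫) + η ^ 2 * ‖v i‖ ^ 2 := by
      have e3 : (x - η • v i) - xtilde = w - η • v i := by rw [hw]; abel
      rw [e3, norm_sub_sq_real, real_inner_smul_right, norm_smul]
      simp only [Real.norm_eq_abs, mul_pow, sq_abs]
    rw [e2, hK]
    nlinarith [h1]
  -- sum
  have hsum : ∑ i, (F (x - η • v i) + c * ‖(x - η • v i) - xtilde‖ ^ 2)
      ≤ (n : ℝ) * (F x + c * ‖w‖ ^ 2) - η * ((n : ℝ) * ‖G‖ ^ 2)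
        - 2 * c * η * ((n : ℝ) * ⟪w, G⟫) + K * ∑ i, ‖v i‖ ^ 2 := by
    calc ∑ i, (F (x - η • v i) + c * ‖(x - η • v i) - xtilde‖ ^ 2)
        ≤ ∑ i, ((F x + c * ‖w‖ ^ 2) - η * ⟪G, v i⟫ - 2 * c * η * ⟪w, v i⟫
            + K * ‖v i‖ ^ 2) := Finset.sum_le_sum fun i _ => key i
      _ = (n : ℝ) * (F x + c * ‖w‖ ^ 2) - η * ⟪G, ∑ i, v i⟫
            - 2 * c * η * ⟪w, ∑ i, v i⟫ + K * ∑ i, ‖v i‖ ^ 2 := by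
          rw [Finset.sum_add_distrib, Finset.sum_sub_distrib, Finset.sum_sub_distrib,
            Finset.sum_const, Finset.card_univ, Fintype.card_fin, nsmul_eq_mul,
            inner_sum, inner_sum, ← Finset.mul_sum, ← Finset.mul_sum, ← Finset.mul_sum]
      _ = _ := by rw [hsvG, hsvw]
  have h7 : (1 / (n : ℝ)) * ∑ i, (F (x - η • v i) + c * ‖(x - η • v i) - xtilde‖ ^ 2)
      ≤ F x + c * ‖w‖ ^ 2 - η * ‖G‖ ^ 2 - 2 * c * η * ⟪w, G⟫
        + K * ((1 / (n : ℝ)) * ∑ i, ‖v i‖ ^ 2) := by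
    have h8 := mul_le_mul_of_nonneg_left hsum (by positivity : (0 : ℝ) ≤ 1 / (n : ℝ))
    have h9 : (1 / (n : ℝ)) * ((n : ℝ) * (F x + c * ‖w‖ ^ 2) - η * ((n : ℝ) * ‖G‖ ^ 2)
        - 2 * c * η * ((n : ℝ) * ⟪w, G⟫) + K * ∑ i, ‖v i‖ ^ 2)
        = F x + c * ‖w‖ ^ 2 - η * ‖G‖ ^ 2 - 2 * c * η * ⟪w, G⟫
          + K * ((1 / (n : ℝ)) * ∑ i, ‖v i‖ ^ 2) := by
      field_simp
    linarith [h8, h9.le, h9.ge]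
  have hM' : (1 / (n : ℝ)) * ∑ i, ‖v i‖ ^ 2 ≤ 2 * ‖G‖ ^ 2 + 2 * L ^ 2 * ‖w‖ ^ 2 := by
    have h8 := mul_le_mul_of_nonneg_left hMn (by positivity : (0 : ℝ) ≤ 1 / (n : ℝ))
    have h9 : (1 / (n : ℝ)) * ((n : ℝ) * (2 * ‖G‖ ^ 2 + 2 * L ^ 2 * ‖w‖ ^ 2))
        = 2 * ‖G‖ ^ 2 + 2 * L ^ 2 * ‖w‖ ^ 2 := by field_simp
    linarith
  have hyoung : -(2 * ⟪w, G⟫) ≤ β * ‖w‖ ^ 2 + ‖G‖ ^ 2 / β := by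
    have hip : -⟪w, G⟫ ≤ ‖w‖ * ‖G‖ := by
      have := abs_real_inner_le_norm w G
      linarith [neg_abs_le (⟪w, G⟫), le_abs_self (⟪w, G⟫)]
    rw [← sub_nonneg]
    have he : β * ‖w‖ ^ 2 + ‖G‖ ^ 2 / β - -(2 * ⟪w, G⟫)
        = (β * ‖w‖ ^ 2 * β + ‖G‖ ^ 2 + 2 * ⟪w, G⟫ * β) / β := by
      field_simp
      ring
    rw [he]
    apply div_nonneg _ hβ.le
    nlinarith [sq_nonneg (β * ‖w‖ - ‖G‖), mul_le_mul_of_nonneg_left hip hβ.le]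
  have h10 := mul_le_mul_of_nonneg_left hyoung (mul_nonneg hc hη.le)
  have h11 := mul_le_mul_of_nonneg_left hM' hK0
  have heq : F x + c * ‖w‖ ^ 2 - η * ‖G‖ ^ 2
      + (c * η) * (β * ‖w‖ ^ 2 + ‖G‖ ^ 2 / β)
      + K * (2 * ‖G‖ ^ 2 + 2 * L ^ 2 * ‖w‖ ^ 2)
      = F x + (c * (1 + η * β + 2 * η ^ 2 * L ^ 2) + η ^ 2 * L ^ 3) * ‖w‖ ^ 2
        - (η - c * η / β - η ^ 2 * L - 2 * c * η ^ 2) * ‖G‖ ^ 2 := by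
    rw [hK]
    field_simp
    ring
  rw [hc']
  linarith [h7, h10, h11, heq.le, heq.ge]
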